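/- Let V : ℝ → [0,∞] be even, integrable, lower semicontinuous, nonincreasing and convex on (0,∞) with lim_{r→0+} V(r) = ∞. Suppose moreover that there exist c, ε > 0 such that V''(s) ≥ c·s^(−(2+a)) for almost every s ∈ (0,ε), for some a ∈ [0,1). Then the Fourier transform V̂(ω) = ∫_ℝ V(t) cos(2πωt) dt satisfies V̂(ω) > 0 for all ω ∈ ℝ. -/

import Mathlib

open Real MeasureTheory Filter Set

private lemma aux_not_affine (V : ℝ → ℝ) (a c ε : ℝ) (hc : 0 < c)
    (hV'' : ∀ᵐ s ∂(volume : Measure ℝ),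
      s ∈ Set.Ioo 0 ε → c * s ^ (-(2 + a)) ≤ deriv (deriv V) s)
    {α β : ℝ} (h0 : 0 < α) (hαβ : α < β) (hβ : β ≤ ε)
    (m b : ℝ) (haff : ∀ x ∈ Set.Ioo α β, V x = m * x + b) : False := by
  have hDV : ∀ x ∈ Set.Ioo α β, deriv V x = m := by
    intro x hx
    have h1 : HasDerivAt (fun y : ℝ => m * y + b) m x := by
      simpa using ((hasDerivAt_id x).const_mul m).add_const b
    have h2 : HasDerivAt V m x := by
      apply h1.congr_of_eventuallyEq
      filter_upwards [isOpen_Ioo.mem_nhds hx] with y hy using haff y hy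
    exact h2.deriv
  have hDDV : ∀ s ∈ Set.Ioo α β, deriv (deriv V) s = 0 := by
    intro s hs
    have hEq : deriv V =ᶠ[nhds s] fun _ => m := by
      filter_upwards [isOpen_Ioo.mem_nhds hs] with y hy using hDV y hy
    rw [Filter.EventuallyEq.deriv_eq hEq]
    exact deriv_const s m
  have hmem : ∃ᵐ s ∂(volume : Measure ℝ), s ∈ Set.Ioo α β := by
    rw [MeasureTheory.frequently_ae_mem_iff, Real.volume_Ioo]
    simp only [ne_eq, ENNReal.ofReal_eq_zero, not_le]
    linarith
  obtain ⟨s, hs1, hs2⟩ := (hmem.and_eventually hV'').exists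
  have hsε : s ∈ Set.Ioo 0 ε := ⟨h0.trans hs1.1, lt_of_lt_of_le hs1.2 hβ⟩
  have h3 := hs2 hsε
  rw [hDDV s hs1] at h3
  have hpos : 0 < c * s ^ (-(2 + a)) := mul_pos hc (Real.rpow_pos_of_pos hsε.1 _)
  linarith

private lemma aux_sdiff_nonneg (V : ℝ → ℝ) (hconv : ConvexOn ℝ (Set.Ioi 0) V)
    {p u v q : ℝ} (hp : 0 < p) (h1 : p < u) (h2 : u < v) (h3 : v < q)
    (heq : u - p = q - v) : V u + V v ≤ V p + V q := by
  have hu : (0:ℝ) < u := hp.trans h1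
  have hq : (0:ℝ) < q := hu.trans (h2.trans h3)
  have hv : (0:ℝ) < v := hu.trans h2
  have s1 := hconv.slope_mono_adjacent (Set.mem_Ioi.2 hp) (Set.mem_Ioi.2 hv) h1 h2
  have s2 := hconv.slope_mono_adjacent (Set.mem_Ioi.2 hu) (Set.mem_Ioi.2 hq) h2 h3
  have s3 : (V u - V p) / (u - p) ≤ (V q - V v) / (q - v) := s1.trans s2
  rw [heq] at s3
  have hL : 0 < q - v := by rw [← heq]; linarith
  have h4 : V u - V p ≤ V q - V v := by
    have h5 := mul_le_mul_of_nonneg_right s3 hL.le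
    rwa [div_mul_cancel₀ _ hL.ne', div_mul_cancel₀ _ hL.ne'] at h5
  linarith

private lemma aux_sdiff_strict (V : ℝ → ℝ) (a c ε : ℝ) (hc : 0 < c)
    (hconv : ConvexOn ℝ (Set.Ioi 0) V)
    (hV'' : ∀ᵐ s ∂(volume : Measure ℝ),
      s ∈ Set.Ioo 0 ε → c * s ^ (-(2 + a)) ≤ deriv (deriv V) s)
    {T t : ℝ} (hT : 0 < T) (ht : 0 < t) (htd : t < min (T/8) ε / 2) :
    V (T/2 - t) + V (T/2 + t) < V t + V (T - t) := by
  have hm1 : min (T/8) ε ≤ T/8 := min_le_left _ _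
  have hm2 : min (T/8) ε ≤ ε := min_le_right _ _
  have h1 : t < T/16 := by linarith
  have h2 : t < ε/2 := by linarith
  have hpu : t < T/2 - t := by linarith
  have huv : T/2 - t < T/2 + t := by linarith
  have hvq : T/2 + t < T - t := by linarith
  have hnn := aux_sdiff_nonneg V hconv ht hpu huv hvq (by ring)
  by_contra hcon
  push_neg at hcon
  have hE : V (T/2 - t) + V (T/2 + t) = V t + V (T - t) := le_antisymm hnn hcon
  have hL : (0:ℝ) < T/2 - 2*t := by linarith
  set s : ℝ := (V (T/2 - t) - V t) / (T/2 - 2*t) with hsdef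
  have haff : ∀ x ∈ Set.Ioo t (T/2 - t), V x = s * x + (V t - s * t) := by
    intro x hx
    obtain ⟨hx1, hx2⟩ := hx
    have hx0 : (0:ℝ) < x := ht.trans hx1
    have B1 := hconv.slope_mono_adjacent (Set.mem_Ioi.2 ht)
      (Set.mem_Ioi.2 (by linarith : (0:ℝ) < T/2 - t)) hx1 hx2
    have B2 := hconv.slope_mono_adjacent (Set.mem_Ioi.2 hx0)
      (Set.mem_Ioi.2 (by linarith : (0:ℝ) < T/2 + t)) hx2 huv
    have B3 := hconv.slope_mono_adjacent (Set.mem_Ioi.2 (by linarith : (0:ℝ) < T/2 - t))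
      (Set.mem_Ioi.2 (by linarith : (0:ℝ) < T - t)) huv hvq
    have hfar : (V (T - t) - V (T/2 + t)) / ((T - t) - (T/2 + t)) = s := by
      have h9 : V (T - t) - V (T/2 + t) = V (T/2 - t) - V t := by linarith
      rw [h9, show (T - t) - (T/2 + t) = T/2 - 2*t by ring, hsdef]
    rw [hfar] at B3
    have hxu : 0 < (T/2 - t) - x := by linarith
    have hmid2 : (V (T/2 - t) - V x) / ((T/2 - t) - x) ≤ s := B2.trans B3
    have htx : 0 < x - t := by linarith
    have e1 : V (T/2 - t) - V x ≤ s * ((T/2 - t) - x) := (div_le_iff₀ hxu).mp hmid2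
    have hmid3 : (V x - V t) / (x - t) ≤ s := B1.trans hmid2
    have e2 : V x - V t ≤ s * (x - t) := (div_le_iff₀ htx).mp hmid3
    have hsL : s * (T/2 - 2*t) = V (T/2 - t) - V t := div_mul_cancel₀ _ hL.ne'
    have e5 : s * (T/2 - 2*t) = s * ((T/2 - t) - x) + s * (x - t) := by ring
    linarith
  have htm : t < min (T/4) ε := lt_min (by linarith) (by linarith)
  have hmu : min (T/4) ε ≤ T/2 - t := (min_le_left _ _).trans (by linarith)
  have hm0 : 0 < min (T/4) ε := ht.trans htm
  refine aux_not_affine V a c ε hc hV''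
    (α := (t + min (T/4) ε)/2) (β := min (T/4) ε)
    (by linarith) (by linarith) (min_le_right _ _) s (V t - s * t) ?_
  intro x hx
  exact haff x ⟨by linarith [hx.1], lt_of_lt_of_le hx.2 hmu⟩

private lemma aux_main (V : ℝ → ℝ) (a c ε : ℝ) (hc : 0 < c) (hε : 0 < ε)
    (hV0 : ∀ t, 0 ≤ V t)
    (heven : ∀ t, V (-t) = V t)
    (hint : Integrable V)
    (hlsc : LowerSemicontinuous V)
    (hconv : ConvexOn ℝ (Set.Ioi 0) V)
    (hV'' : ∀ᵐ s ∂(volume : Measure ℝ),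
      s ∈ Set.Ioo 0 ε → c * s ^ (-(2 + a)) ≤ deriv (deriv V) s)
    (ω : ℝ) (hω : 0 < ω) :
    0 < ∫ t, V t * Real.cos (2 * Real.pi * ω * t) := by
  set T : ℝ := 1/ω with hTdef
  have hT : 0 < T := one_div_pos.mpr hω
  have hωT : ω * T = 1 := by rw [hTdef, mul_one_div, div_self hω.ne']
  set f : ℝ → ℝ := fun t => V t * Real.cos (2 * Real.pi * ω * t) with hfdef
  have hf_int : Integrable f := by
    have h1 : Integrable (fun t => Real.cos (2 * Real.pi * ω * t) * V t) :=
      hint.bdd_mul ((show Continuous fun t : ℝ => Real.cos (2 * Real.pi * ω * t) by continuity).aestronglyMeasurable) (c := 1) (Filter.Eventually.of_forall fun x => by simpa using Real.abs_cos_le_one _)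
    apply h1.congr
    filter_upwards with t using mul_comm _ _
  have hf_abs : ∀ x : ℝ, f |x| = f x := by
    intro x
    rcases le_or_gt 0 x with h | h
    · rw [abs_of_nonneg h]
    · rw [abs_of_neg h, hfdef]
      simp only
      rw [heven x, show 2 * Real.pi * ω * (-x) = -(2 * Real.pi * ω * x) by ring, Real.cos_neg]
  have h2I : ∫ t, f t = 2 * ∫ t in Set.Ioi (0:ℝ), f t := by
    rw [← integral_comp_abs (f := f)]
    exact integral_congr_ae (Filter.Eventually.of_forall fun x => (hf_abs x).symm)
  set D : ℕ → ℝ → ℝ := fun k t =>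
    V (t + (k:ℝ)*T) - V ((k:ℝ)*T + T/2 - t) - V (t + ((k:ℝ)*T + T/2)) + V ((k:ℝ)*T + T - t)
    with hDdef
  have hptwise : ∀ (k : ℕ) (t : ℝ),
      f (t + (k:ℝ)*T) + f ((k:ℝ)*T + T/2 - t) + f (t + ((k:ℝ)*T + T/2)) + f ((k:ℝ)*T + T - t)
        = D k t * Real.cos (2 * Real.pi * ω * t) := by
    intro k t
    have e1 : Real.cos (2 * Real.pi * ω * (t + (k:ℝ)*T)) = Real.cos (2 * Real.pi * ω * t) := by
      rw [show 2 * Real.pi * ω * (t + (k:ℝ)*T)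
            = 2 * Real.pi * ω * t + (k:ℝ) * (2 * Real.pi) by rw [hTdef]; field_simp]
      rw [show (2 * Real.pi * ω * t) + (k:ℝ) * (2 * Real.pi)
            = (2 * Real.pi * ω * t) + ((k:ℤ):ℝ) * (2 * Real.pi) by push_cast; ring]
      rw [Real.cos_add_int_mul_two_pi]
    have e2 : Real.cos (2 * Real.pi * ω * ((k:ℝ)*T + T/2 - t))
        = -Real.cos (2 * Real.pi * ω * t) := by
      rw [show 2 * Real.pi * ω * ((k:ℝ)*T + T/2 - t)
            = (Real.pi - 2 * Real.pi * ω * t) + (k:ℝ) * (2 * Real.pi) by rw [hTdef]; field_simp; ring]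
      rw [show (Real.pi - 2 * Real.pi * ω * t) + (k:ℝ) * (2 * Real.pi)
            = (Real.pi - 2 * Real.pi * ω * t) + ((k:ℤ):ℝ) * (2 * Real.pi) by push_cast; ring]
      rw [Real.cos_add_int_mul_two_pi, Real.cos_pi_sub]
    have e3 : Real.cos (2 * Real.pi * ω * (t + ((k:ℝ)*T + T/2)))
        = -Real.cos (2 * Real.pi * ω * t) := by
      rw [show 2 * Real.pi * ω * (t + ((k:ℝ)*T + T/2))
            = (2 * Real.pi * ω * t + Real.pi) + (k:ℝ) * (2 * Real.pi) by rw [hTdef]; field_simp; ring]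
      rw [show (2 * Real.pi * ω * t + Real.pi) + (k:ℝ) * (2 * Real.pi)
            = (2 * Real.pi * ω * t + Real.pi) + ((k:ℤ):ℝ) * (2 * Real.pi) by push_cast; ring]
      rw [Real.cos_add_int_mul_two_pi, Real.cos_add_pi]
    have e4 : Real.cos (2 * Real.pi * ω * ((k:ℝ)*T + T - t))
        = Real.cos (2 * Real.pi * ω * t) := by
      rw [show 2 * Real.pi * ω * ((k:ℝ)*T + T - t)
            = (-(2 * Real.pi * ω * t)) + ((k:ℝ) + 1) * (2 * Real.pi) by rw [hTdef]; field_simp; ring]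
      rw [show (-(2 * Real.pi * ω * t)) + ((k:ℝ) + 1) * (2 * Real.pi)
            = (-(2 * Real.pi * ω * t)) + (((k:ℤ) + 1 : ℤ):ℝ) * (2 * Real.pi) by push_cast; ring]
      rw [Real.cos_add_int_mul_two_pi, Real.cos_neg]
    simp only [hfdef, hDdef]
    rw [e1, e2, e3, e4]
    ring
  have hcomp1 : ∀ d : ℝ, Integrable (fun t => f (t + d)) := fun d => hf_int.comp_add_right d
  have hcomp2 : ∀ d : ℝ, Integrable (fun t => f (d - t)) := fun d => hf_int.comp_sub_left d
  have hDint : ∀ k : ℕ, Integrable (fun t => D k t * Real.cos (2 * Real.pi * ω * t)) := by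
    intro k
    have h5 : Integrable (fun t =>
        f (t + (k:ℝ)*T) + f ((k:ℝ)*T + T/2 - t) + f (t + ((k:ℝ)*T + T/2)) + f ((k:ℝ)*T + T - t)) :=
      (((hcomp1 ((k:ℝ)*T)).add (hcomp2 ((k:ℝ)*T + T/2))).add (hcomp1 ((k:ℝ)*T + T/2))).add
        (hcomp2 ((k:ℝ)*T + T))
    exact h5.congr (Filter.Eventually.of_forall fun t => hptwise k t)
  have hterm : ∀ k : ℕ, ∫ x in Set.Ioc ((k:ℝ)*T) (((k:ℝ)+1)*T), f x
      = ∫ t in (0:ℝ)..(T/4), D k t * Real.cos (2 * Real.pi * ω * t) := by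
    intro k
    have hk0 : (0:ℝ) ≤ (k:ℝ)*T := mul_nonneg (Nat.cast_nonneg k) hT.le
    have hii : ∀ u v : ℝ, IntervalIntegrable f volume u v := fun u v => hf_int.intervalIntegrable
    rw [← intervalIntegral.integral_of_le (by nlinarith : (k:ℝ)*T ≤ ((k:ℝ)+1)*T)]
    have p1 : ∫ x in ((k:ℝ)*T)..((k:ℝ)*T + T/4), f x
        = ∫ x in (0:ℝ)..(T/4), f (x + (k:ℝ)*T) := by
      rw [intervalIntegral.integral_comp_add_right f ((k:ℝ)*T), zero_add,
        add_comm (T/4) ((k:ℝ)*T)]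
    have p2 : ∫ x in ((k:ℝ)*T + T/4)..((k:ℝ)*T + T/2), f x
        = ∫ x in (0:ℝ)..(T/4), f ((k:ℝ)*T + T/2 - x) := by
      rw [intervalIntegral.integral_comp_sub_left f ((k:ℝ)*T + T/2), sub_zero,
        show (k:ℝ)*T + T/2 - T/4 = (k:ℝ)*T + T/4 by ring]
    have p3 : ∫ x in ((k:ℝ)*T + T/2)..((k:ℝ)*T + T/2 + T/4), f x
        = ∫ x in (0:ℝ)..(T/4), f (x + ((k:ℝ)*T + T/2)) := by
      rw [intervalIntegral.integral_comp_add_right f ((k:ℝ)*T + T/2), zero_add,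
        add_comm (T/4) ((k:ℝ)*T + T/2)]
    have p4 : ∫ x in ((k:ℝ)*T + T/2 + T/4)..((k:ℝ)*T + T), f x
        = ∫ x in (0:ℝ)..(T/4), f ((k:ℝ)*T + T - x) := by
      rw [intervalIntegral.integral_comp_sub_left f ((k:ℝ)*T + T), sub_zero,
        show (k:ℝ)*T + T - T/4 = (k:ℝ)*T + T/2 + T/4 by ring]
    rw [show ((k:ℝ)+1)*T = (k:ℝ)*T + T by ring]
    rw [← intervalIntegral.integral_add_adjacent_intervals
          (hii ((k:ℝ)*T) ((k:ℝ)*T + T/2)) (hii ((k:ℝ)*T + T/2) ((k:ℝ)*T + T)),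
        ← intervalIntegral.integral_add_adjacent_intervals
          (hii ((k:ℝ)*T) ((k:ℝ)*T + T/4)) (hii ((k:ℝ)*T + T/4) ((k:ℝ)*T + T/2)),
        ← intervalIntegral.integral_add_adjacent_intervals
          (hii ((k:ℝ)*T + T/2) ((k:ℝ)*T + T/2 + T/4)) (hii ((k:ℝ)*T + T/2 + T/4) ((k:ℝ)*T + T))]
    rw [p1, p2, p3, p4]
    have h12 : IntervalIntegrable (fun x => f (x + (k:ℝ)*T) + f ((k:ℝ)*T + T/2 - x))
        volume 0 (T/4) :=
      ((hcomp1 ((k:ℝ)*T)).add (hcomp2 ((k:ℝ)*T + T/2))).intervalIntegrable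
    have h34 : IntervalIntegrable (fun x => f (x + ((k:ℝ)*T + T/2)) + f ((k:ℝ)*T + T - x))
        volume 0 (T/4) :=
      ((hcomp1 ((k:ℝ)*T + T/2)).add (hcomp2 ((k:ℝ)*T + T))).intervalIntegrable
    rw [← intervalIntegral.integral_add
          ((hcomp1 ((k:ℝ)*T)).intervalIntegrable) ((hcomp2 ((k:ℝ)*T + T/2)).intervalIntegrable),
        ← intervalIntegral.integral_add
          ((hcomp1 ((k:ℝ)*T + T/2)).intervalIntegrable) ((hcomp2 ((k:ℝ)*T + T)).intervalIntegrable),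
        ← intervalIntegral.integral_add h12 h34]
    apply intervalIntegral.integral_congr
    intro t _
    simpa [add_assoc] using hptwise k t
  have hptnn : ∀ (k : ℕ), ∀ t ∈ Set.Ioc (0:ℝ) (T/4),
      0 ≤ D k t * Real.cos (2 * Real.pi * ω * t) := by
    intro k t ht
    obtain ⟨ht0, ht4⟩ := ht
    have hk0 : (0:ℝ) ≤ (k:ℝ)*T := mul_nonneg (Nat.cast_nonneg k) hT.le
    have h2πω : (0:ℝ) ≤ 2 * Real.pi * ω :=
      mul_nonneg (mul_nonneg (by norm_num) Real.pi_pos.le) hω.le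
    rcases eq_or_lt_of_le ht4 with heq4 | hlt4
    · have hz : Real.cos (2 * Real.pi * ω * t) = 0 := by
        rw [heq4, show 2 * Real.pi * ω * (T/4) = Real.pi/2 by rw [hTdef]; field_simp; ring]
        exact Real.cos_pi_div_two
      rw [hz, mul_zero]
    · have hang : 2 * Real.pi * ω * t ≤ Real.pi / 2 := by
        have h6 : 2 * Real.pi * ω * t ≤ 2 * Real.pi * ω * (T/4) :=
          mul_le_mul_of_nonneg_left hlt4.le h2πω
        rwa [show 2 * Real.pi * ω * (T/4) = Real.pi/2 by rw [hTdef]; field_simp; ring] at h6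
      have hcos : 0 ≤ Real.cos (2 * Real.pi * ω * t) := by
        apply Real.cos_nonneg_of_mem_Icc
        constructor
        · have hp2 : 0 ≤ 2 * Real.pi * ω * t := mul_nonneg h2πω ht0.le
          have := Real.pi_pos
          linarith
        · exact hang
      have hD : 0 ≤ D k t := by
        have h7 := aux_sdiff_nonneg V hconv
          (p := t + (k:ℝ)*T) (u := (k:ℝ)*T + T/2 - t) (v := t + ((k:ℝ)*T + T/2))
          (q := (k:ℝ)*T + T - t)
          (by linarith) (by linarith) (by linarith) (by linarith) (by ring)
        simp only [hDdef]
        linarith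
      exact mul_nonneg hD hcos
  have hnnI : ∀ k : ℕ, 0 ≤ ∫ t in (0:ℝ)..(T/4), D k t * Real.cos (2 * Real.pi * ω * t) := by
    intro k
    rw [intervalIntegral.integral_of_le (by linarith : (0:ℝ) ≤ T/4)]
    exact MeasureTheory.setIntegral_nonneg measurableSet_Ioc (hptnn k)
  -- strict positivity of the k = 0 term
  set δ : ℝ := min (T/8) ε / 2 with hδdef
  have hδpos : 0 < δ := div_pos (lt_min (by linarith) hε) two_pos
  have hδT : δ < T/4 := by
    have := min_le_left (T/8) ε
    rw [hδdef]
    linarith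
  have h0pos : 0 < ∫ t in (0:ℝ)..(T/4), D 0 t * Real.cos (2 * Real.pi * ω * t) := by
    rw [intervalIntegral.integral_of_le (by linarith : (0:ℝ) ≤ T/4)]
    rw [MeasureTheory.setIntegral_pos_iff_support_of_nonneg_ae
      ((ae_restrict_iff' measurableSet_Ioc).mpr (Filter.Eventually.of_forall (hptnn 0)))
      ((hDint 0).integrableOn)]
    have hsub : Set.Ioo (0:ℝ) δ ⊆
        Function.support (fun t => D 0 t * Real.cos (2 * Real.pi * ω * t))
          ∩ Set.Ioc (0:ℝ) (T/4) := by
      intro t ht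
      obtain ⟨ht0, htδ⟩ := ht
      have h2πω : (0:ℝ) < 2 * Real.pi * ω :=
        mul_pos (mul_pos (by norm_num) Real.pi_pos) hω
      have hcos : 0 < Real.cos (2 * Real.pi * ω * t) := by
        apply Real.cos_pos_of_mem_Ioo
        constructor
        · have : 0 < 2 * Real.pi * ω * t := mul_pos h2πω ht0
          have := Real.pi_pos
          linarith
        · have h6 : 2 * Real.pi * ω * t < 2 * Real.pi * ω * (T/4) :=
            mul_lt_mul_of_pos_left (htδ.trans hδT) h2πω
          rwa [show 2 * Real.pi * ω * (T/4) = Real.pi/2 by rw [hTdef]; field_simp; ring] at h6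
      have hstrict := aux_sdiff_strict V a c ε hc hconv hV'' hT ht0 (by rw [hδdef] at htδ; exact htδ)
      have hD0 : D 0 t = V t - V (T/2 - t) - V (t + T/2) + V (T - t) := by
        simp only [hDdef, Nat.cast_zero, zero_mul, add_zero, zero_add]
      have hDpos : 0 < D 0 t := by
        rw [add_comm (T/2) t] at hstrict
        rw [hD0]
        linarith
      refine ⟨Function.mem_support.mpr (ne_of_gt (mul_pos hDpos hcos)), ⟨ht0, (htδ.trans hδT).le⟩⟩
    calc (0:ENNReal) < ENNReal.ofReal δ := ENNReal.ofReal_pos.mpr hδpos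
      _ = volume (Set.Ioo (0:ℝ) δ) := by rw [Real.volume_Ioo, sub_zero]
      _ ≤ _ := measure_mono hsub
  -- decomposition of (0, ∞)
  have hUnion : Set.Ioi (0:ℝ) = ⋃ k : ℕ, Set.Ioc ((k:ℝ)*T) (((k:ℝ)+1)*T) := by
    ext x
    simp only [Set.mem_Ioi, Set.mem_iUnion, Set.mem_Ioc]
    constructor
    · intro hx
      have hxT : 0 < x / T := div_pos hx hT
      have hceil : 1 ≤ ⌈x/T⌉₊ := Nat.ceil_pos.mpr hxT
      refine ⟨⌈x/T⌉₊ - 1, ?_, ?_⟩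
      · rw [Nat.cast_sub hceil, Nat.cast_one]
        have hlt : (⌈x/T⌉₊ : ℝ) < x/T + 1 := Nat.ceil_lt_add_one hxT.le
        have h8 : (⌈x/T⌉₊ : ℝ) - 1 < x/T := by linarith
        have h9 := mul_lt_mul_of_pos_right h8 hT
        rwa [div_mul_cancel₀ x hT.ne'] at h9
      · rw [Nat.cast_sub hceil, Nat.cast_one, sub_add_cancel]
        have h9 := mul_le_mul_of_nonneg_right (Nat.le_ceil (x/T)) hT.le
        rw [div_mul_cancel₀ x hT.ne'] at h9
        exact h9
    · rintro ⟨k, hk1, _⟩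
      exact lt_of_le_of_lt (mul_nonneg (Nat.cast_nonneg k) hT.le) hk1
  have hdisj : Pairwise (Function.onFun Disjoint
      fun k : ℕ => Set.Ioc ((k:ℝ)*T) (((k:ℝ)+1)*T)) := by
    intro i j hij
    apply Set.disjoint_left.mpr
    intro x hx1 hx2
    rcases lt_or_gt_of_ne hij with h | h
    · have h3 : ((i:ℝ)+1) ≤ (j:ℝ) := by exact_mod_cast h
      nlinarith [hx1.2, hx2.1, hT]
    · have h3 : ((j:ℝ)+1) ≤ (i:ℝ) := by exact_mod_cast h
      nlinarith [hx1.1, hx2.2, hT]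
  have hsum : HasSum (fun k : ℕ => ∫ x in Set.Ioc ((k:ℝ)*T) (((k:ℝ)+1)*T), f x)
      (∫ x in Set.Ioi (0:ℝ), f x) := by
    have h10 := MeasureTheory.hasSum_integral_iUnion (μ := volume) (f := f)
      (fun k : ℕ => measurableSet_Ioc) hdisj hf_int.integrableOn
    rwa [← hUnion] at h10
  have hfinal : 0 < ∫ x in Set.Ioi (0:ℝ), f x := by
    have hle := le_hasSum hsum 0 (fun k _ => by rw [hterm k]; exact hnnI k)
    rw [hterm 0] at hle
    exact lt_of_lt_of_le h0pos hle
  rw [h2I]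
  linarith

theorem stmt8 (V : ℝ → ℝ) (a c ε : ℝ) (ha0 : 0 ≤ a) (ha1 : a < 1)
    (hc : 0 < c) (hε : 0 < ε)
    (hV0 : ∀ t, 0 ≤ V t)
    (heven : ∀ t, V (-t) = V t)
    (hint : Integrable V)
    (hlsc : LowerSemicontinuous V)
    (hmono : AntitoneOn V (Set.Ioi 0))
    (hconv : ConvexOn ℝ (Set.Ioi 0) V)
    (hblow : Tendsto V (nhdsWithin 0 (Set.Ioi 0)) atTop)
    (hV'' : ∀ᵐ s ∂(volume : Measure ℝ),
      s ∈ Set.Ioo 0 ε → c * s ^ (-(2 + a)) ≤ deriv (deriv V) s) :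
    ∀ ω : ℝ, 0 < ∫ t, V t * Real.cos (2 * Real.pi * ω * t) := by
  intro ω
  rcases lt_trichotomy ω 0 with hw | hw | hw
  · have hkey := aux_main V a c ε hc hε hV0 heven hint hlsc hconv hV'' (-ω) (by linarith)
    have heq : (fun t => V t * Real.cos (2 * Real.pi * (-ω) * t))
        = fun t => V t * Real.cos (2 * Real.pi * ω * t) := by
      funext t
      rw [show 2 * Real.pi * (-ω) * t = -(2 * Real.pi * ω * t) by ring, Real.cos_neg]
    rwa [heq] at hkey
  · subst hw
    have h0 : ∀ t : ℝ, V t * Real.cos (2 * Real.pi * 0 * t) = V t := by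
      intro t; simp
    simp only [h0]
    rw [integral_pos_iff_support_of_nonneg_ae (Filter.Eventually.of_forall hV0) hint]
    have hev : ∀ᶠ x in nhdsWithin 0 (Set.Ioi 0), 1 ≤ V x := hblow.eventually_ge_atTop 1
    rw [eventually_nhdsWithin_iff] at hev
    obtain ⟨δ, hδpos, hδ⟩ := Metric.eventually_nhds_iff.mp hev
    have hsub : Set.Ioo (0:ℝ) δ ⊆ Function.support V := by
      intro x hx
      have h1x : 1 ≤ V x := hδ (by rw [Real.dist_eq, sub_zero, abs_of_pos hx.1]; exact hx.2)
        (Set.mem_Ioi.mpr hx.1)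
      exact fun h0x => by rw [h0x] at h1x; linarith
    calc (0:ENNReal) < ENNReal.ofReal δ := ENNReal.ofReal_pos.mpr hδpos
      _ = volume (Set.Ioo (0:ℝ) δ) := by rw [Real.volume_Ioo, sub_zero]
      _ ≤ volume (Function.support V) := measure_mono hsub
  · exact aux_main V a c ε hc hε hV0 heven hint hlsc hconv hV'' ω hw
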